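/- In the three-signal game specified in the context, the strategy profile π with π₁(s'|θ') = π₁(s'|θ'') = 1, π₂(a'|s') = 1, π₂(a''|s'') = 1, π₂(a''|s''') = 1 is a rationality-compatible equilibrium (RCE). -/

import Mathlib

open scoped Classical
open Finset Filter

noncomputable section

/-- `p` is a probability distribution on the finite type `X`. -/
def IsDist {X : Type*} [Fintype X] (p : X → ℝ) : Prop :=
  (∀ x, 0 ≤ p x) ∧ ∑ x, p x = 1

variable {Θ S A : Type*} [Fintype Θ] [Fintype S] [Fintype A]

/-- Sender's expected payoff `u₁(θ, s, π₂(·|s))` from signal `s` when the receiver plays `π₂`. -/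
def u1R (u₁ : Θ → S → A → ℝ) (π₂ : S → A → ℝ) (θ : Θ) (s : S) : ℝ :=
  ∑ a, π₂ s a * u₁ θ s a

/-- Receiver's expected payoff of action `a` after signal `s` under belief `p`. -/
def expU2 (u₂ : Θ → S → A → ℝ) (p : Θ → ℝ) (s : S) (a : A) : ℝ :=
  ∑ θ, p θ * u₂ θ s a

/-- `BR(p, s)`: pure best responses to belief `p` after signal `s`. -/
def BRb (u₂ : Θ → S → A → ℝ) (p : Θ → ℝ) (s : S) : Set A :=
  {a | ∀ a', expU2 u₂ p s a' ≤ expU2 u₂ p s a}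

/-- `A_s^BR`: actions that best respond to some belief after `s`. -/
def ABR (u₂ : Θ → S → A → ℝ) (s : S) : Set A :=
  {a | ∃ p, IsDist p ∧ a ∈ BRb u₂ p s}

/-- Membership in `Π₂•`: a receiver behavior strategy supported on `A_s^BR` after every `s`. -/
def Rational2 (u₂ : Θ → S → A → ℝ) (π₂ : S → A → ℝ) : Prop :=
  (∀ s, IsDist (π₂ s)) ∧ ∀ s a, π₂ s a ≠ 0 → a ∈ ABR u₂ s

/-- `u₁(θ,s,π₂(·|s)) ≥ max_{s' ≠ s} u₁(θ,s',π₂(·|s'))`. -/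
def WeakBest (u₁ : Θ → S → A → ℝ) (π₂ : S → A → ℝ) (θ : Θ) (s : S) : Prop :=
  ∀ s', s' ≠ s → u1R u₁ π₂ θ s' ≤ u1R u₁ π₂ θ s

/-- `u₁(θ,s,π₂(·|s)) > max_{s' ≠ s} u₁(θ,s',π₂(·|s'))`. -/
def StrictBest (u₁ : Θ → S → A → ℝ) (π₂ : S → A → ℝ) (θ : Θ) (s : S) : Prop :=
  ∀ s', s' ≠ s → u1R u₁ π₂ θ s' < u1R u₁ π₂ θ s

/-- `θ' ≿_s θ''`: `s` is more rationally-compatible with `θ'` than with `θ''`. -/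
def MoreCompat (u₁ u₂ : Θ → S → A → ℝ) (s : S) (θ' θ'' : Θ) : Prop :=
  ∀ π₂, Rational2 u₂ π₂ → WeakBest u₁ π₂ θ'' s → StrictBest u₁ π₂ θ' s

/-- `s` maximizes `s' ↦ u₁(θ, s', π₂(·|s'))`. -/
def GlobalBest (u₁ : Θ → S → A → ℝ) (π₂ : S → A → ℝ) (θ : Θ) (s : S) : Prop :=
  ∀ s', u1R u₁ π₂ θ s' ≤ u1R u₁ π₂ θ s

/-- `S_θ`: signals that best respond to some (not necessarily rational) receiver strategy. -/
def Sθ (u₁ : Θ → S → A → ℝ) (θ : Θ) : Set S :=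
  {s | ∃ π₂ : S → A → ℝ, (∀ s', IsDist (π₂ s')) ∧ GlobalBest u₁ π₂ θ s}

/-- `Θ_s`: types for which `s` is not dominated. -/
def Θtypes (u₁ : Θ → S → A → ℝ) (s : S) : Set Θ := {θ | s ∈ Sθ u₁ θ}

/-- Membership in `Π₁•`. -/
def Rational1 (u₁ : Θ → S → A → ℝ) (π₁ : Θ → S → ℝ) : Prop :=
  (∀ θ, IsDist (π₁ θ)) ∧ ∀ θ s, π₁ θ s ≠ 0 → s ∈ Sθ u₁ θ

/-- Nash equilibrium of the signaling game. -/
def NashEq (lam : Θ → ℝ) (u₁ u₂ : Θ → S → A → ℝ)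
    (π₁ : Θ → S → ℝ) (π₂ : S → A → ℝ) : Prop :=
  (∀ θ, IsDist (π₁ θ)) ∧ (∀ s, IsDist (π₂ s)) ∧
  (∀ θ s, π₁ θ s ≠ 0 → GlobalBest u₁ π₂ θ s) ∧
  (∀ s, (∃ θ, π₁ θ s ≠ 0) → ∀ a, π₂ s a ≠ 0 →
    ∀ a', ∑ θ, lam θ * π₁ θ s * u₂ θ s a' ≤ ∑ θ, lam θ * π₁ θ s * u₂ θ s a)

/-- Equilibrium expected payoff `E_π[u₁ | θ]`. -/
def eqPayoff (u₁ : Θ → S → A → ℝ) (π₁ : Θ → S → ℝ) (π₂ : S → A → ℝ) (θ : Θ) : ℝ :=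
  ∑ s, π₁ θ s * u1R u₁ π₂ θ s

/-- `s` is off the path of play of `π₁`. -/
def OffPath (π₁ : Θ → S → ℝ) (s : S) : Prop := ∀ θ, π₁ θ s = 0

/-- `J̃(s, π)`: types for which some best response to `s` weakly improves on the equilibrium. -/
def Jt (u₁ u₂ : Θ → S → A → ℝ) (π₁ : Θ → S → ℝ) (π₂ : S → A → ℝ) (s : S) : Set Θ :=
  {θ | ∃ a ∈ ABR u₂ s, eqPayoff u₁ π₁ π₂ θ ≤ u₁ θ s a}

/-- The odds-ratio condition defining `P_{θ'▷θ''}`. -/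
def OddsLe (lam : Θ → ℝ) (θ' θ'' : Θ) (p : Θ → ℝ) : Prop :=
  p θ'' * lam θ' ≤ lam θ'' * p θ'

/-- `Δ(T)`: beliefs supported on `T`. -/
def DeltaOn {Θ : Type*} [Fintype Θ] (T : Set Θ) : Set (Θ → ℝ) :=
  {p | IsDist p ∧ ∀ θ ∉ T, p θ = 0}

/-- `P̃(s, π)`: rationality-compatible beliefs at profile `π`. -/
def Pt (lam : Θ → ℝ) (u₁ u₂ : Θ → S → A → ℝ) (π₁ : Θ → S → ℝ) (π₂ : S → A → ℝ)
    (s : S) : Set (Θ → ℝ) :=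
  if (Jt u₁ u₂ π₁ π₂ s).Nonempty then
    DeltaOn (Jt u₁ u₂ π₁ π₂ s) ∩
      {p | ∀ θ' θ'', MoreCompat u₁ u₂ s θ' θ'' → OddsLe lam θ' θ'' p}
  else DeltaOn (Θtypes u₁ s)

/-- Rationality-compatible equilibrium. -/
def RCE (lam : Θ → ℝ) (u₁ u₂ : Θ → S → A → ℝ)
    (π₁ : Θ → S → ℝ) (π₂ : S → A → ℝ) : Prop :=
  NashEq lam u₁ u₂ π₁ π₂ ∧
  ∀ s a, π₂ s a ≠ 0 → ∃ p ∈ Pt lam u₁ u₂ π₁ π₂ s, a ∈ BRb u₂ p s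

/-- `P̂(s)`: uniformly rationality-compatible beliefs. -/
def Ph (lam : Θ → ℝ) (u₁ u₂ : Θ → S → A → ℝ) (s : S) : Set (Θ → ℝ) :=
  DeltaOn (Θtypes u₁ s) ∩
    {p | ∀ θ' θ'', MoreCompat u₁ u₂ s θ' θ'' → OddsLe lam θ' θ'' p}

/-- Uniform rationality-compatible equilibrium. -/
def URCE (lam : Θ → ℝ) (u₁ u₂ : Θ → S → A → ℝ)
    (π₁ : Θ → S → ℝ) (π₂ : S → A → ℝ) : Prop :=
  NashEq lam u₁ u₂ π₁ π₂ ∧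
  ∀ θ s, OffPath π₁ s → ∀ a, (∃ p ∈ Ph lam u₁ u₂ s, a ∈ BRb u₂ p s) →
    u₁ θ s a ≤ eqPayoff u₁ π₁ π₂ θ

/-- Receiver's expected payoff of a mixed action `α` after `s` under belief `p`. -/
def expU2m (u₂ : Θ → S → A → ℝ) (p : Θ → ℝ) (s : S) (α : A → ℝ) : ℝ :=
  ∑ θ, p θ * ∑ a, α a * u₂ θ s a

/-- `MBR(p, s)`: mixed best responses to belief `p` after `s`. -/
def MBRb (u₂ : Θ → S → A → ℝ) (p : Θ → ℝ) (s : S) : Set (A → ℝ) :=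
  {α | IsDist α ∧ ∀ α', IsDist α' → expU2m u₂ p s α' ≤ expU2m u₂ p s α}

/-- `MBR(s)`. -/
def MBR (u₂ : Θ → S → A → ℝ) (s : S) : Set (A → ℝ) :=
  {α | ∃ p, IsDist p ∧ α ∈ MBRb u₂ p s}

/-- `u₁(θ, s, α)` for a mixed action `α`. -/
def u1m (u₁ : Θ → S → A → ℝ) (θ : Θ) (s : S) (α : A → ℝ) : ℝ :=
  ∑ a, α a * u₁ θ s a

/-- `D(θ, s; π)`. -/
def Dset (u₁ u₂ : Θ → S → A → ℝ) (π₁ : Θ → S → ℝ) (π₂ : S → A → ℝ)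
    (θ : Θ) (s : S) : Set (A → ℝ) :=
  {α | α ∈ MBR u₂ s ∧ eqPayoff u₁ π₁ π₂ θ < u1m u₁ θ s α}

/-- `D°(θ, s; π)`. -/
def D0set (u₁ u₂ : Θ → S → A → ℝ) (π₁ : Θ → S → ℝ) (π₂ : S → A → ℝ)
    (θ : Θ) (s : S) : Set (A → ℝ) :=
  {α | α ∈ MBR u₂ s ∧ eqPayoff u₁ π₁ π₂ θ = u1m u₁ θ s α}

/-! ### The three-signal game (RCE that is not divine) -/

/-- Sender types: `t1 = θ'`, `t2 = θ''`. -/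
inductive Ty | t1 | t2
deriving DecidableEq

instance : Fintype Ty := ⟨{Ty.t1, Ty.t2}, fun x => by cases x <;> simp⟩

/-- Signals: `s1 = s'`, `s2 = s''`, `s3 = s'''`. -/
inductive Sg | s1 | s2 | s3
deriving DecidableEq

instance : Fintype Sg := ⟨{Sg.s1, Sg.s2, Sg.s3}, fun x => by cases x <;> simp⟩

/-- Receiver actions: `a1 = a'`, `a2 = a''`. -/
inductive Ac | a1 | a2
deriving DecidableEq

instance : Fintype Ac := ⟨{Ac.a1, Ac.a2}, fun x => by cases x <;> simp⟩

/-- Prior: `λ(θ') = 2/3`, `λ(θ'') = 1/3`. -/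
def lamG : Ty → ℝ
  | .t1 => 2 / 3
  | .t2 => 1 / 3

/-- Sender payoffs. -/
def u1G : Ty → Sg → Ac → ℝ
  | .t1, .s1, .a1 => 0
  | .t1, .s1, .a2 => -1
  | .t2, .s1, .a1 => 0
  | .t2, .s1, .a2 => -1
  | .t1, .s2, .a1 => 2
  | .t1, .s2, .a2 => -1
  | .t2, .s2, .a1 => 1
  | .t2, .s2, .a2 => -1
  | .t1, .s3, .a1 => 5
  | .t1, .s3, .a2 => -3
  | .t2, .s3, .a1 => 0
  | .t2, .s3, .a2 => -2

/-- Receiver payoffs. -/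
def u2G : Ty → Sg → Ac → ℝ
  | .t1, .s1, .a1 => 1
  | .t1, .s1, .a2 => 0
  | .t2, .s1, .a1 => 0
  | .t2, .s1, .a2 => 1
  | .t1, .s2, .a1 => 1
  | .t1, .s2, .a2 => 0
  | .t2, .s2, .a1 => 0
  | .t2, .s2, .a2 => 1
  | .t1, .s3, .a1 => 0
  | .t1, .s3, .a2 => 1
  | .t2, .s3, .a1 => 1
  | .t2, .s3, .a2 => 0

/-- Both types pool on `s'`. -/
def pi1G : Ty → Sg → ℝ := fun _ s => if s = Sg.s1 then 1 else 0

/-- The receiver plays `a'` after `s'` and `a''` after `s''` and `s'''`. -/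
def pi2G : Sg → Ac → ℝ
  | .s1, .a1 => 1
  | .s2, .a2 => 1
  | .s3, .a2 => 1
  | _, _ => 0


lemma sumTy (f : Ty → ℝ) : ∑ x, f x = f .t1 + f .t2 := by
  show f .t1 + (f .t2 + 0) = _; ring

lemma sumSg (f : Sg → ℝ) : ∑ x, f x = f .s1 + f .s2 + f .s3 := by
  show f .s1 + (f .s2 + (f .s3 + 0)) = _; ring

lemma sumAc (f : Ac → ℝ) : ∑ x, f x = f .a1 + f .a2 := by
  show f .a1 + (f .a2 + 0) = _; ring

def dT1 : Ty → ℝ := fun θ => if θ = Ty.t1 then 1 else 0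
def dT2 : Ty → ℝ := fun θ => if θ = Ty.t2 then 1 else 0

lemma isDist_dT1 : IsDist dT1 := by
  constructor
  · intro x; simp [dT1]; split <;> norm_num
  · rw [sumTy]; simp [dT1]

lemma isDist_dT2 : IsDist dT2 := by
  constructor
  · intro x; simp [dT2]; split <;> norm_num
  · rw [sumTy]; simp [dT2]

lemma isDist_lamG : IsDist lamG := by
  constructor
  · intro x; cases x <;> norm_num [lamG]
  · rw [sumTy]; norm_num [lamG]

lemma a1_ABR : ∀ s, Ac.a1 ∈ ABR u2G s := by
  intro s
  cases s
  · exact ⟨dT1, isDist_dT1, by intro a'; cases a' <;>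
      simp [expU2, sumTy, dT1, u2G] <;> norm_num⟩
  · exact ⟨dT1, isDist_dT1, by intro a'; cases a' <;>
      simp [expU2, sumTy, dT1, u2G] <;> norm_num⟩
  · exact ⟨dT2, isDist_dT2, by intro a'; cases a' <;>
      simp [expU2, sumTy, dT2, u2G] <;> norm_num⟩

lemma eqPayoff_zero : ∀ θ, eqPayoff u1G pi1G pi2G θ = 0 := by
  intro θ
  cases θ <;>
    simp [eqPayoff, sumSg, sumAc, u1R, pi1G, pi2G, u1G] <;> norm_num

lemma JtFull : ∀ s θ, θ ∈ Jt u1G u2G pi1G pi2G s := by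
  intro s θ
  refine ⟨Ac.a1, a1_ABR s, ?_⟩
  rw [eqPayoff_zero]
  cases s <;> cases θ <;> norm_num [u1G]

/-- receiver strategy always playing a1, used as a counterexample. -/
def pic : Sg → Ac → ℝ := fun _ a => if a = Ac.a1 then 1 else 0

lemma rational_pic : Rational2 u2G pic := by
  constructor
  · intro s
    constructor
    · intro a; simp [pic]; split <;> norm_num
    · rw [sumAc]; simp [pic]
  · intro s a ha
    have : a = Ac.a1 := by
      cases a
      · rfl
      · simp [pic] at ha
    rw [this]; exact a1_ABR s

lemma u1R_pic : ∀ θ s, u1R u1G pic θ s = u1G θ s Ac.a1 := by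
  intro θ s; simp [u1R, sumAc, pic]

lemma notMC2 : ¬ MoreCompat u1G u2G Sg.s2 Ty.t1 Ty.t2 := by
  intro h
  have hw : WeakBest u1G pic Ty.t2 Sg.s2 := by
    intro s' _; rw [u1R_pic, u1R_pic]
    cases s' <;> norm_num [u1G]
  have hs := h pic rational_pic hw Sg.s3 (by decide)
  rw [u1R_pic, u1R_pic] at hs
  norm_num [u1G] at hs

lemma notMC3 : ¬ MoreCompat u1G u2G Sg.s3 Ty.t2 Ty.t1 := by
  intro h
  have hw : WeakBest u1G pic Ty.t1 Sg.s3 := by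
    intro s' _; rw [u1R_pic, u1R_pic]
    cases s' <;> norm_num [u1G]
  have hs := h pic rational_pic hw Sg.s2 (by decide)
  rw [u1R_pic, u1R_pic] at hs
  norm_num [u1G] at hs

lemma Pt_eq (s : Sg) : Pt lamG u1G u2G pi1G pi2G s =
    DeltaOn (Jt u1G u2G pi1G pi2G s) ∩
      {p | ∀ θ' θ'', MoreCompat u1G u2G s θ' θ'' → OddsLe lamG θ' θ'' p} := by
  rw [Pt, if_pos ⟨Ty.t1, JtFull s Ty.t1⟩]


/-- in the three-signal game, the pooling-on-`s'` profile is an RCE. -/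
theorem three_signal_pooling_is_RCE :
    RCE lamG u1G u2G pi1G pi2G := by
  constructor
  · refine ⟨?_, ?_, ?_, ?_⟩
    · intro θ
      constructor
      · intro s; simp [pi1G]; split <;> norm_num
      · rw [sumSg]; simp [pi1G]
    · intro s
      constructor
      · intro a; cases s <;> cases a <;> norm_num [pi2G]
      · cases s <;> (rw [sumAc]; norm_num [pi2G])
    · intro θ s hs
      have hs1 : s = Sg.s1 := by
        by_contra h; simp [pi1G, h] at hs
      subst hs1
      intro s'
      cases θ <;> cases s' <;>
        simp [u1R, sumAc, pi2G, u1G] <;> norm_num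
    · intro s hs a ha a'
      obtain ⟨θ, hθ⟩ := hs
      have hs1 : s = Sg.s1 := by
        by_contra h; simp [pi1G, h] at hθ
      subst hs1
      have ha1 : a = Ac.a1 := by
        cases a
        · rfl
        · simp [pi2G] at ha
      subst ha1
      cases a' <;>
        simp [sumTy, lamG, pi1G, u2G] <;> norm_num
  · intro s a ha
    cases s <;> cases a
    · -- s1, a1
      refine ⟨lamG, ?_, ?_⟩
      · rw [Pt_eq]
        refine ⟨⟨isDist_lamG, fun θ hθ => absurd (JtFull _ θ) hθ⟩, ?_⟩
        intro θ' θ'' _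
        unfold OddsLe; rw [mul_comm]
      · intro a'; cases a' <;> simp [expU2, sumTy, lamG, u2G] <;> norm_num
    · simp [pi2G] at ha
    · simp [pi2G] at ha
    · -- s2, a2
      refine ⟨dT2, ?_, ?_⟩
      · rw [Pt_eq]
        refine ⟨⟨isDist_dT2, fun θ hθ => absurd (JtFull _ θ) hθ⟩, ?_⟩
        intro θ' θ'' hmc
        cases θ' <;> cases θ''
        · unfold OddsLe; rw [mul_comm]
        · exact absurd hmc notMC2
        · unfold OddsLe; simp [dT2, lamG]; norm_num
        · unfold OddsLe; rw [mul_comm]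
      · intro a'; cases a' <;> simp [expU2, sumTy, dT2, u2G] <;> norm_num
    · simp [pi2G] at ha
    · -- s3, a2
      refine ⟨dT1, ?_, ?_⟩
      · rw [Pt_eq]
        refine ⟨⟨isDist_dT1, fun θ hθ => absurd (JtFull _ θ) hθ⟩, ?_⟩
        intro θ' θ'' hmc
        cases θ' <;> cases θ''
        · unfold OddsLe; rw [mul_comm]
        · unfold OddsLe; simp [dT1, lamG]
        · exact absurd hmc notMC3
        · unfold OddsLe; rw [mul_comm]
      · intro a'; cases a' <;> simp [expU2, sumTy, dT1, u2G] <;> norm_num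

end
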